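/- Let a : ℝ → ℝ be continuous, T-periodic, with a(t) < 0 for all t, and b : ℝ → ℝ continuous, T-periodic, with b(t) ≥ 0 for all t and b not identically zero. Then the unique T-periodic solution W of W' = a(t) W + b(t) satisfies W(t) > 0 for all t. -/

import Mathlib

open Real Set Filter

/-- Proposition 4.4 (abstract form): the T-periodic solution of
W' = a(t)W + b(t) with a < 0, b ≥ 0, b ≢ 0 is strictly positive. -/
theorem periodic_solution_positive
    (a b W : ℝ → ℝ) (T : ℝ) (hT : 0 < T)
    (hacont : Continuous a) (haper : ∀ t, a (t + T) = a t)
    (haneg : ∀ t, a t < 0)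
    (hbcont : Continuous b) (hbper : ∀ t, b (t + T) = b t)
    (hbnonneg : ∀ t, 0 ≤ b t) (hbne : ∃ t, b t ≠ 0)
    (hWode : ∀ t, HasDerivAt W (a t * W t + b t) t)
    (hWper : ∀ t, W (t + T) = W t) :
    ∀ t, 0 < W t := by
  have haint : ∀ s t : ℝ, IntervalIntegrable a MeasureTheory.volume s t :=
    fun s t => hacont.intervalIntegrable s t
  set A : ℝ → ℝ := fun t => ∫ x in (0:ℝ)..t, a x with hA
  have hAderiv : ∀ t, HasDerivAt A (a t) t := by
    intro t
    exact intervalIntegral.integral_hasDerivAt_right (haint 0 t)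
      (hacont.stronglyMeasurableAtFilter _ _) hacont.continuousAt
  set F : ℝ → ℝ := fun t => W t * Real.exp (-A t) with hF
  have hFderiv : ∀ t, HasDerivAt F (b t * Real.exp (-A t)) t := by
    intro t
    have h1 : HasDerivAt (fun u => Real.exp (-A u)) (Real.exp (-A t) * (-a t)) t :=
      ((hAderiv t).neg).exp
    have h2 : HasDerivAt F _ t := (hWode t).mul h1
    convert h2 using 1
    ring
  have hFmono : Monotone F := by
    have hdiff : Differentiable ℝ F := fun t => (hFderiv t).differentiableAt
    refine monotone_of_deriv_nonneg hdiff ?_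
    intro t
    rw [(hFderiv t).deriv]
    exact mul_nonneg (hbnonneg t) (Real.exp_pos _).le
  have haP : Function.Periodic a T := haper
  have hbP : Function.Periodic b T := hbper
  have hIneg : ∀ t, (∫ x in t..t + T, a x) < 0 := by
    intro t
    have h0 : (∫ x in t..t+T, a x) = ∫ x in (0:ℝ)..(0+T), a x :=
      haP.intervalIntegral_add_eq t 0
    have hpos : 0 < ∫ x in (0:ℝ)..T, -a x :=
      intervalIntegral.intervalIntegral_pos_of_pos_on
        ((hacont.neg).intervalIntegrable _ _)
        (fun x _ => neg_pos.mpr (haneg x)) hT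
    rw [intervalIntegral.integral_neg] at hpos
    rw [h0, zero_add]
    linarith
  have hFshift : ∀ t, F (t + T) = F t * Real.exp (-(∫ x in t..t+T, a x)) := by
    intro t
    have hAs : A (t + T) = A t + ∫ x in t..t+T, a x :=
      (intervalIntegral.integral_add_adjacent_intervals (haint 0 t) (haint t (t+T))).symm
    rw [hF]
    simp only [hWper t, hAs, neg_add, Real.exp_add]
    ring
  have hFnonneg : ∀ t, 0 ≤ F t := by
    intro t
    by_contra h
    push_neg at h
    have h1 : F t ≤ F (t + T) := hFmono (by linarith)
    have h2 := hFshift t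
    have h3 : 1 < Real.exp (-(∫ x in t..t+T, a x)) := by
      calc (1:ℝ) = Real.exp 0 := Real.exp_zero.symm
        _ < _ := Real.exp_lt_exp.mpr (by linarith [hIneg t])
    nlinarith
  have hWnonneg : ∀ s, 0 ≤ W s := by
    intro s
    have h1 := hFnonneg s
    have h2 := Real.exp_pos (-A s)
    simp only [hF] at h1
    nlinarith
  intro t
  rcases lt_or_eq_of_le (hWnonneg t) with h | h
  · exact h
  exfalso
  have hFt : F t = 0 := by simp [hF, ← h]
  obtain ⟨t₁, hbt₁⟩ := hbne
  have hbt₁pos : 0 < b t₁ := lt_of_le_of_ne (hbnonneg t₁) (Ne.symm hbt₁)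
  obtain ⟨n, hn⟩ := exists_nat_gt ((t₁ - t) / T + 1)
  set s : ℝ := t₁ - n * T with hs
  have hst : s < t := by
    have h1 : (t₁ - t)/T < n := by linarith
    have h2 := (div_lt_iff₀ hT).mp h1
    simp only [hs]
    linarith
  have hbs : b s = b t₁ := hbP.sub_nat_mul_eq n
  have hF0 : ∀ u ∈ Iio t, F u = 0 :=
    fun u hu => le_antisymm (hFt ▸ hFmono (le_of_lt hu)) (hFnonneg u)
  have hconst : HasDerivAt F 0 s := by
    have heq : F =ᶠ[nhds s] fun _ => 0 := by
      filter_upwards [Iio_mem_nhds hst] with u hu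
      exact hF0 u hu
    exact (hasDerivAt_const s (0:ℝ)).congr_of_eventuallyEq heq
  have huniq := (hFderiv s).unique hconst
  have hexp := Real.exp_pos (-A s)
  rw [hbs] at huniq
  nlinarith
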